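/- Let (ℰ,𝓗) be a closed bilinear form on 𝓛 with constants α₀, K and associated resolvent (G_α)_{α>α₀}, and for β > α₀ set ℰ^{(β)}(u,v) := β⟨u − βG_β u, v⟩_𝓛. Then: (a) for every α > α₀, the subspace G_α(𝓛) is dense in the Hilbert space (𝓗, ‖·‖_𝓗); and (b) for all u, v ∈ 𝓗, lim_{β→∞} ℰ^{(β)}(u,v) = ℰ(u,v). -/

import Mathlib

open Filter Topology
open scoped RealInnerProductSpace

noncomputable section

/-- The `𝓗`-norm associated to a bilinear form `E` with constant `α₀`:
`‖u‖_𝓗 = (ℰ^s_{α₀+1}(u,u))^{1/2} = (E(u,u) + (α₀+1)⟨u,u⟩_𝓛)^{1/2}`. -/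
def Hnorm {L : Type*} [NormedAddCommGroup L] [InnerProductSpace ℝ L]
    (E : L → L → ℝ) (α₀ : ℝ) (u : L) : ℝ :=
  Real.sqrt (E u u + (α₀ + 1) * ⟪u, u⟫)

/-- `(ℰ, 𝓗)` is a closed bilinear form on the real Hilbert space `L` with constants
`α₀ ∈ ℝ` and `K ≥ 1`: `𝓗` is a dense subspace, `E` is bilinear on `𝓗`, the symmetric part
`ℰ^s_{α₀}` is positive (hence `ℰ^s_{α₀+1}` is positive definite and dominates the `𝓛`-norm),
`𝓗` is complete for the `𝓗`-norm (ℰ.1), and the weak sector condition (ℰ.2) holds. -/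
structure IsClosedForm {L : Type*} [NormedAddCommGroup L] [InnerProductSpace ℝ L]
    (E : L → L → ℝ) (H : Submodule ℝ L) (α₀ K : ℝ) : Prop where
  one_le_K : 1 ≤ K
  dense_dom : Dense (H : Set L)
  add_left : ∀ u v w : L, u ∈ H → v ∈ H → w ∈ H → E (u + v) w = E u w + E v w
  add_right : ∀ u v w : L, u ∈ H → v ∈ H → w ∈ H → E u (v + w) = E u v + E u w
  smul_left : ∀ (c : ℝ) (u v : L), u ∈ H → v ∈ H → E (c • u) v = c * E u v
  smul_right : ∀ (c : ℝ) (u v : L), u ∈ H → v ∈ H → E u (c • v) = c * E u v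
  nonneg : ∀ u ∈ H, 0 ≤ E u u + α₀ * ⟪u, u⟫
  hilbert : ∀ u : ℕ → L, (∀ n, u n ∈ H) →
      (∀ ε > (0:ℝ), ∃ N : ℕ, ∀ m ≥ N, ∀ n ≥ N, Hnorm E α₀ (u m - u n) < ε) →
      ∃ l ∈ H, Tendsto (fun n => Hnorm E α₀ (u n - l)) atTop (𝓝 0)
  sector : ∀ u ∈ H, ∀ v ∈ H,
      |E u v + (α₀ + 1) * ⟪u, v⟫| ≤ K * Hnorm E α₀ u * Hnorm E α₀ v

/-- `Θ(u) = sup { ℰ_{α₀+1}(v,u) : v ∈ 𝓗, ‖v‖_𝓗 = 1 }`. -/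
def Theta {L : Type*} [NormedAddCommGroup L] [InnerProductSpace ℝ L]
    (E : L → L → ℝ) (H : Submodule ℝ L) (α₀ : ℝ) (u : L) : ℝ :=
  sSup {x : ℝ | ∃ v ∈ H, Hnorm E α₀ v = 1 ∧ x = E v u + (α₀ + 1) * ⟪v, u⟫}

/-- `(G_α)_{α > α₀}` is the resolvent associated to the closed form `(ℰ,𝓗)`:
`G_α(𝓛) ⊆ 𝓗`, `ℰ_α(G_α f, u) = ⟨f,u⟩_𝓛` for all `f ∈ 𝓛`, `u ∈ 𝓗`, the resolvent equation
`G_α − G_β + (α−β) G_α G_β = 0` holds, and `‖(α−α₀) G_α f‖_𝓛 ≤ ‖f‖_𝓛`. -/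
def IsResolventOf {L : Type*} [NormedAddCommGroup L] [InnerProductSpace ℝ L]
    (E : L → L → ℝ) (H : Submodule ℝ L) (α₀ : ℝ) (G : ℝ → L →ₗ[ℝ] L) : Prop :=
  (∀ α, α₀ < α → ∀ f : L, G α f ∈ H) ∧
  (∀ α, α₀ < α → ∀ f : L, ∀ u ∈ H, E (G α f) u + α * ⟪G α f, u⟫ = ⟪f, u⟫) ∧
  (∀ α β, α₀ < α → α₀ < β → ∀ f : L, G α f - G β f + (α - β) • G α (G β f) = 0) ∧
  (∀ α, α₀ < α → ∀ f : L, ‖(α - α₀) • G α f‖ ≤ ‖f‖)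

namespace ClosedFormAux

variable {L : Type*} [NormedAddCommGroup L] [InnerProductSpace ℝ L]
variable {E : L → L → ℝ} {H : Submodule ℝ L} {α₀ K : ℝ}

lemma hnorm_nonneg (u : L) : 0 ≤ Hnorm E α₀ u := Real.sqrt_nonneg _

section Basic
variable (hcf : IsClosedForm E H α₀ K)
include hcf

lemma quad_nonneg {u : L} (hu : u ∈ H) : 0 ≤ E u u + (α₀ + 1) * ⟪u, u⟫ := by
  have h1 := hcf.nonneg u hu
  have h2 : (0:ℝ) ≤ ⟪u, u⟫ := real_inner_self_nonneg
  nlinarith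

lemma sq_hnorm {u : L} (hu : u ∈ H) :
    Hnorm E α₀ u ^ 2 = E u u + (α₀ + 1) * ⟪u, u⟫ :=
  Real.sq_sqrt (quad_nonneg hcf hu)

lemma norm_le_hnorm {u : L} (hu : u ∈ H) : ‖u‖ ≤ Hnorm E α₀ u := by
  rw [Hnorm, ← Real.sqrt_mul_self (norm_nonneg u), ← real_inner_self_eq_norm_mul_norm]
  exact Real.sqrt_le_sqrt (by nlinarith [hcf.nonneg u hu])

lemma abs_inner_le_hnorm {u v : L} (hu : u ∈ H) (hv : v ∈ H) :
    |⟪u, v⟫| ≤ Hnorm E α₀ u * Hnorm E α₀ v :=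
  (abs_real_inner_le_norm u v).trans
    (mul_le_mul (norm_le_hnorm hcf hu) (norm_le_hnorm hcf hv) (norm_nonneg v)
      (hnorm_nonneg u))

lemma E_neg_left {u v : L} (hu : u ∈ H) (hv : v ∈ H) : E (-u) v = -E u v := by
  rw [← neg_one_smul ℝ u, hcf.smul_left _ _ _ hu hv]; ring

lemma E_neg_right {u v : L} (hu : u ∈ H) (hv : v ∈ H) : E u (-v) = -E u v := by
  rw [← neg_one_smul ℝ v, hcf.smul_right _ _ _ hu hv]; ring

lemma E_sub_left {u v w : L} (hu : u ∈ H) (hv : v ∈ H) (hw : w ∈ H) :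
    E (u - v) w = E u w - E v w := by
  rw [sub_eq_add_neg, hcf.add_left _ _ _ hu (H.neg_mem hv) hw, E_neg_left hcf hv hw]; ring

lemma E_sub_right {u v w : L} (hu : u ∈ H) (hv : v ∈ H) (hw : w ∈ H) :
    E u (v - w) = E u v - E u w := by
  rw [sub_eq_add_neg, hcf.add_right _ _ _ hu hv (H.neg_mem hw), E_neg_right hcf hu hw]; ring

lemma abs_E_le {u v : L} (hu : u ∈ H) (hv : v ∈ H) :
    |E u v| ≤ (K + |α₀ + 1|) * (Hnorm E α₀ u * Hnorm E α₀ v) := by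
  have hs := hcf.sector u hu v hv
  have hip := abs_inner_le_hnorm hcf hu hv
  have h1 : |E u v| ≤ |E u v + (α₀ + 1) * ⟪u, v⟫| + |(α₀ + 1) * ⟪u, v⟫| := by
    have := abs_add_le (E u v + (α₀ + 1) * ⟪u, v⟫) (-((α₀ + 1) * ⟪u, v⟫))
    simpa using this
  have h2 : |(α₀ + 1) * ⟪u, v⟫| ≤ |α₀ + 1| * (Hnorm E α₀ u * Hnorm E α₀ v) := by
    rw [abs_mul]
    exact mul_le_mul_of_nonneg_left hip (abs_nonneg _)
  calc |E u v| ≤ K * Hnorm E α₀ u * Hnorm E α₀ v + |α₀ + 1| * (Hnorm E α₀ u * Hnorm E α₀ v) := by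
        linarith
    _ = (K + |α₀ + 1|) * (Hnorm E α₀ u * Hnorm E α₀ v) := by ring

lemma hnorm_neg {u : L} (hu : u ∈ H) : Hnorm E α₀ (-u) = Hnorm E α₀ u := by
  unfold Hnorm
  rw [E_neg_left hcf hu (H.neg_mem hu), E_neg_right hcf hu hu, inner_neg_neg]
  ring_nf

lemma hnorm_sub_symm {u v : L} (hu : u ∈ H) (hv : v ∈ H) :
    Hnorm E α₀ (u - v) = Hnorm E α₀ (v - u) := by
  rw [← neg_sub v u, hnorm_neg hcf (H.sub_mem hv hu)]

end Basic
end ClosedFormAux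

def Hsp {L : Type*} [NormedAddCommGroup L] [InnerProductSpace ℝ L]
    (E : L → L → ℝ) (H : Submodule ℝ L) (α₀ : ℝ) : Type _ := H

namespace Hsp

variable {L : Type*} [NormedAddCommGroup L] [InnerProductSpace ℝ L]
variable {E : L → L → ℝ} {H : Submodule ℝ L} {α₀ K : ℝ}

instance : AddCommGroup (Hsp E H α₀) := inferInstanceAs (AddCommGroup H)
instance : Module ℝ (Hsp E H α₀) := inferInstanceAs (Module ℝ H)

def val (x : Hsp E H α₀) : L := Subtype.val (show H from x)

def mk (u : L) (hu : u ∈ H) : Hsp E H α₀ := show H from ⟨u, hu⟩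

lemma mem (x : Hsp E H α₀) : x.val ∈ H := (show H from x).2

@[simp] lemma val_add (x y : Hsp E H α₀) : (x + y).val = x.val + y.val := rfl
@[simp] lemma val_sub (x y : Hsp E H α₀) : (x - y).val = x.val - y.val := rfl
@[simp] lemma val_neg (x : Hsp E H α₀) : (-x).val = -x.val := rfl
@[simp] lemma val_smul (c : ℝ) (x : Hsp E H α₀) : (c • x).val = c • x.val := rfl
@[simp] lemma val_zero : (0 : Hsp E H α₀).val = 0 := rfl
@[simp] lemma val_mk (u : L) (hu : u ∈ H) : (mk u hu : Hsp E H α₀).val = u := rfl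

lemma ext {x y : Hsp E H α₀} (h : x.val = y.val) : x = y := Subtype.ext h

end Hsp

namespace ClosedFormAux

variable {L : Type*} [NormedAddCommGroup L] [InnerProductSpace ℝ L]
variable {E : L → L → ℝ} {H : Submodule ℝ L} {α₀ K : ℝ}

def hCore (hcf : IsClosedForm E H α₀ K) : InnerProductSpace.Core ℝ (Hsp E H α₀) where
  inner x y := (E x.val y.val + E y.val x.val) / 2 + (α₀ + 1) * ⟪x.val, y.val⟫
  conj_inner_symm x y := by
    rw [starRingEnd_apply, star_trivial]
    show (E y.val x.val + E x.val y.val) / 2 + (α₀ + 1) * ⟪y.val, x.val⟫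
      = (E x.val y.val + E y.val x.val) / 2 + (α₀ + 1) * ⟪x.val, y.val⟫
    rw [real_inner_comm]
    ring
  re_inner_nonneg x := by
    have h := quad_nonneg hcf x.mem
    simp only [RCLike.re_to_real]
    nlinarith
  add_left x y z := by
    simp only [Hsp.val_add, hcf.add_left _ _ _ x.mem y.mem z.mem,
      hcf.add_right _ _ _ z.mem x.mem y.mem, inner_add_left]
    ring
  smul_left x y r := by
    simp only [Hsp.val_smul, hcf.smul_left _ _ _ x.mem y.mem,
      hcf.smul_right _ _ _ y.mem x.mem, real_inner_smul_left, starRingEnd_apply, star_trivial]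
    ring
  definite x hx := by
    have hx' : (E x.val x.val + E x.val x.val) / 2 + (α₀ + 1) * ⟪x.val, x.val⟫ = 0 := hx
    have h1 := hcf.nonneg x.val x.mem
    have h2 : (0:ℝ) ≤ ⟪x.val, x.val⟫ := real_inner_self_nonneg
    have hx2 : E x.val x.val + (α₀ + 1) * ⟪x.val, x.val⟫ = 0 := by linear_combination hx'
    clear hx hx'
    have h3 : (⟪x.val, x.val⟫ : ℝ) = 0 := by nlinarith
    have h4 : x.val = 0 := by rwa [inner_self_eq_zero (𝕜 := ℝ)] at h3
    exact Hsp.ext (by simpa using h4)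

lemma hnorm_triangle (hcf : IsClosedForm E H α₀ K) {u v : L} (hu : u ∈ H) (hv : v ∈ H) :
    Hnorm E α₀ (u + v) ≤ Hnorm E α₀ u + Hnorm E α₀ v := by
  letI core : InnerProductSpace.Core ℝ (Hsp E H α₀) := hCore hcf
  letI : NormedAddCommGroup (Hsp E H α₀) := core.toNormedAddCommGroup
  letI : InnerProductSpace ℝ (Hsp E H α₀) := InnerProductSpace.ofCore core.toCore
  have hnx : ∀ x : Hsp E H α₀, ‖x‖ = Hnorm E α₀ x.val := by
    intro x
    rw [@norm_eq_sqrt_real_inner (Hsp E H α₀) _ _ x]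
    show Real.sqrt ((E x.val x.val + E x.val x.val) / 2 + (α₀ + 1) * ⟪x.val, x.val⟫) = _
    unfold Hnorm
    congr 1
    ring
  have := norm_add_le (Hsp.mk u hu : Hsp E H α₀) (Hsp.mk v hv)
  rw [hnx, hnx, hnx] at this
  simpa using this

end ClosedFormAux

namespace ClosedFormAux

variable {L : Type*} [NormedAddCommGroup L] [InnerProductSpace ℝ L]
variable {E : L → L → ℝ} {H : Submodule ℝ L} {α₀ K : ℝ}

lemma dense_range_aux (hcf : IsClosedForm E H α₀ K) (G : ℝ → L →ₗ[ℝ] L)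
    (hG : IsResolventOf E H α₀ G) :
    ∀ u ∈ H, ∀ ε > (0:ℝ), ∃ f : L, Hnorm E α₀ (G (α₀ + 1) f - u) < ε := by
  obtain ⟨hGmem, hGeq, hGres, hGcon⟩ := hG
  letI core : InnerProductSpace.Core ℝ (Hsp E H α₀) := hCore hcf
  letI : NormedAddCommGroup (Hsp E H α₀) := core.toNormedAddCommGroup
  letI : InnerProductSpace ℝ (Hsp E H α₀) := InnerProductSpace.ofCore core.toCore
  have hnx : ∀ x : Hsp E H α₀, ‖x‖ = Hnorm E α₀ x.val := by
    intro x
    rw [@norm_eq_sqrt_real_inner (Hsp E H α₀) _ _ x]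
    have h : (⟪x, x⟫ : ℝ) = E x.val x.val + (α₀ + 1) * ⟪x.val, x.val⟫ := by
      show (E x.val x.val + E x.val x.val) / 2 + (α₀ + 1) * ⟪x.val, x.val⟫ = _
      ring
    rw [h]
    rfl
  haveI : CompleteSpace (Hsp E H α₀) := by
    apply Metric.complete_of_cauchySeq_tendsto
    intro u hcau
    rw [Metric.cauchySeq_iff] at hcau
    have hc : ∀ ε > (0:ℝ), ∃ N : ℕ, ∀ m ≥ N, ∀ n ≥ N,
        Hnorm E α₀ ((u m).val - (u n).val) < ε := by
      intro ε hε
      obtain ⟨N, hN⟩ := hcau ε hε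
      refine ⟨N, fun m hm n hn => ?_⟩
      have := hN m hm n hn
      rwa [dist_eq_norm, hnx] at this
    obtain ⟨l, hl, hconv⟩ := hcf.hilbert (fun n => (u n).val) (fun n => (u n).mem) hc
    refine ⟨Hsp.mk l hl, ?_⟩
    rw [tendsto_iff_dist_tendsto_zero]
    have heq : (fun n => dist (u n) (Hsp.mk l hl)) = fun n => Hnorm E α₀ ((u n).val - l) :=
      funext fun n => by rw [dist_eq_norm, hnx]; rfl
    rw [heq]
    exact hconv
  let B₀ : Hsp E H α₀ →ₗ[ℝ] Hsp E H α₀ →ₗ[ℝ] ℝ :=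
    LinearMap.mk₂ ℝ (fun x y => E y.val x.val + (α₀ + 1) * ⟪y.val, x.val⟫)
      (fun x x' y => by
        rw [Hsp.val_add, hcf.add_right _ _ _ y.mem x.mem x'.mem, inner_add_right]; ring)
      (fun c x y => by
        rw [Hsp.val_smul, hcf.smul_right _ _ _ y.mem x.mem, real_inner_smul_right, smul_eq_mul]
        ring)
      (fun x y y' => by
        rw [Hsp.val_add, hcf.add_left _ _ _ y.mem y'.mem x.mem, inner_add_left]; ring)
      (fun c x y => by
        rw [Hsp.val_smul, hcf.smul_left _ _ _ y.mem x.mem, real_inner_smul_left, smul_eq_mul]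
        ring)
  have hB₀ : ∀ x y : Hsp E H α₀, ‖B₀ x y‖ ≤ K * ‖x‖ * ‖y‖ := by
    intro x y
    have hs := hcf.sector y.val y.mem x.val x.mem
    rw [Real.norm_eq_abs, hnx, hnx]
    calc |B₀ x y| = |E y.val x.val + (α₀ + 1) * ⟪y.val, x.val⟫| := rfl
      _ ≤ K * Hnorm E α₀ y.val * Hnorm E α₀ x.val := hs
      _ = K * Hnorm E α₀ x.val * Hnorm E α₀ y.val := by ring
  let B : Hsp E H α₀ →L[ℝ] Hsp E H α₀ →L[ℝ] ℝ := LinearMap.mkContinuous₂ B₀ K hB₀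
  have hBapp : ∀ x y : Hsp E H α₀, B x y = E y.val x.val + (α₀ + 1) * ⟪y.val, x.val⟫ :=
    fun x y => rfl
  have coercive : IsCoercive B := by
    refine ⟨1, one_pos, fun x => ?_⟩
    have h1 : Hnorm E α₀ x.val * Hnorm E α₀ x.val = E x.val x.val + (α₀ + 1) * ⟪x.val, x.val⟫ := by
      rw [← sq]; exact sq_hnorm hcf x.mem
    rw [one_mul, hBapp, hnx, h1]
  have hα1 : α₀ < α₀ + 1 := by linarith
  let Gl : L →ₗ[ℝ] Hsp E H α₀ :=
    { toFun := fun f => Hsp.mk (G (α₀ + 1) f) (hGmem _ hα1 f)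
      map_add' := fun f g => Hsp.ext (by simp [Hsp.val_mk, map_add])
      map_smul' := fun c f => Hsp.ext (by simp [Hsp.val_mk, map_smul]) }
  have hGlval : ∀ f : L, (Gl f).val = G (α₀ + 1) f := fun f => rfl
  set R := LinearMap.range Gl with hR
  have hRbot : Rᗮ = ⊥ := by
    rw [Submodule.eq_bot_iff]
    intro x hx
    have hsurj : Function.Surjective (InnerProductSpace.continuousLinearMapOfBilin B) := by
      exact LinearMap.range_eq_top.mp coercive.range_eq_top
    obtain ⟨w, hw⟩ := hsurj x
    have hrep : ∀ v : Hsp E H α₀, (⟪x, v⟫ : ℝ) = B w v := by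
      intro v
      rw [← hw]
      exact InnerProductSpace.continuousLinearMapOfBilin_apply B w v
    have hw0 : w.val = 0 := by
      have h1 : ∀ f : L, (⟪f, w.val⟫ : ℝ) = 0 := by
        intro f
        have h2 : (⟪Gl f, x⟫ : ℝ) = 0 :=
          (Submodule.mem_orthogonal R x).mp hx (Gl f) (LinearMap.mem_range_self Gl f)
        have h3 : B w (Gl f) = ⟪f, w.val⟫ := by
          rw [hBapp, hGlval]
          exact hGeq (α₀ + 1) hα1 f w.val w.mem
        rw [← h3, ← hrep, real_inner_comm, h2]
      have := h1 w.val
      rwa [inner_self_eq_zero (𝕜 := ℝ)] at this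
    have hw' : w = 0 := Hsp.ext (by simpa using hw0)
    rw [← hw, hw', map_zero]
  have hdense := Submodule.topologicalClosure_eq_top_iff.mpr hRbot
  intro u hu ε hε
  have hmem : (Hsp.mk u hu : Hsp E H α₀) ∈ closure (R : Set (Hsp E H α₀)) := by
    rw [← Submodule.topologicalClosure_coe, hdense]
    trivial
  obtain ⟨b, hbR, hbd⟩ := Metric.mem_closure_iff.mp hmem ε hε
  obtain ⟨f, rfl⟩ := hbR
  refine ⟨f, ?_⟩
  rw [dist_eq_norm, hnx] at hbd
  have heq : Hnorm E α₀ (G (α₀ + 1) f - u)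
      = Hnorm E α₀ ((Hsp.mk u hu - Gl f : Hsp E H α₀).val) := by
    rw [Hsp.val_sub, Hsp.val_mk, hGlval]
    exact hnorm_sub_symm hcf (hGmem _ hα1 f) hu
  rw [heq]
  exact hbd

end ClosedFormAux

namespace ClosedFormAux

variable {L : Type*} [NormedAddCommGroup L] [InnerProductSpace ℝ L]
variable {E : L → L → ℝ} {H : Submodule ℝ L} {α₀ K : ℝ}

lemma E_ubeta (hcf : IsClosedForm E H α₀ K) (G : ℝ → L →ₗ[ℝ] L)
    (hG : IsResolventOf E H α₀ G) {β : ℝ} (hβ : α₀ < β) (f : L) {v : L} (hv : v ∈ H) :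
    E (β • G β f) v = β * ⟪f - β • G β f, v⟫ := by
  have h := hG.2.1 β hβ f v hv
  have hm := hG.1 β hβ f
  rw [hcf.smul_left _ _ _ hm hv, inner_sub_left, real_inner_smul_left]
  linear_combination β * h

lemma hnorm_w_sq (hcf : IsClosedForm E H α₀ K) (G : ℝ → L →ₗ[ℝ] L)
    (hG : IsResolventOf E H α₀ G) {β : ℝ} (hβ : α₀ < β) {u : L} (hu : u ∈ H) :
    Hnorm E α₀ (β • G β u - u) ^ 2
      = (α₀ + 1 - β) * ⟪β • G β u - u, β • G β u - u⟫ - E u (β • G β u - u) := by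
  set w := β • G β u - u with hw
  have hmb : β • G β u ∈ H := H.smul_mem _ (hG.1 β hβ u)
  have hwH : w ∈ H := H.sub_mem hmb hu
  rw [sq_hnorm hcf hwH]
  have h1 : E w w = E (β • G β u) w - E u w := E_sub_left hcf hmb hu hwH
  have h2 : E (β • G β u) w = β * ⟪u - β • G β u, w⟫ := E_ubeta hcf G hG hβ u hwH
  have h3 : (⟪u - β • G β u, w⟫ : ℝ) = -⟪w, w⟫ := by
    rw [show u - β • G β u = -w by rw [hw]; abel, inner_neg_left]
  rw [h1, h2, h3]
  ring

lemma hnorm_w_le (hcf : IsClosedForm E H α₀ K) (G : ℝ → L →ₗ[ℝ] L)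
    (hG : IsResolventOf E H α₀ G) {β : ℝ} (hβ : α₀ + 1 ≤ β) {u : L} (hu : u ∈ H) :
    Hnorm E α₀ (β • G β u - u) ≤ (K + |α₀ + 1|) * Hnorm E α₀ u := by
  have hβ' : α₀ < β := by linarith
  set w := β • G β u - u with hw
  have hwH : w ∈ H := H.sub_mem (H.smul_mem _ (hG.1 β hβ' u)) hu
  have hsq := hnorm_w_sq hcf G hG hβ' hu
  have hip : (0:ℝ) ≤ ⟪w, w⟫ := real_inner_self_nonneg
  have h1 : Hnorm E α₀ w ^ 2 ≤ -E u w := by nlinarith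
  have h2 : -E u w ≤ (K + |α₀ + 1|) * (Hnorm E α₀ u * Hnorm E α₀ w) :=
    (neg_le_abs _).trans (abs_E_le hcf hu hwH)
  have h0 : 0 ≤ Hnorm E α₀ w := hnorm_nonneg _
  have ha : 0 ≤ (K + |α₀ + 1|) * Hnorm E α₀ u := by
    have := hcf.one_le_K
    have := abs_nonneg (α₀ + 1)
    have := hnorm_nonneg (E := E) (α₀ := α₀) u
    positivity
  by_contra hcon
  push_neg at hcon
  nlinarith

lemma inner_w_le (hcf : IsClosedForm E H α₀ K) (G : ℝ → L →ₗ[ℝ] L)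
    (hG : IsResolventOf E H α₀ G) {β : ℝ} (hβ : α₀ + 1 ≤ β) {u : L} (hu : u ∈ H) :
    (β - (α₀ + 1)) * ⟪β • G β u - u, β • G β u - u⟫
      ≤ ((K + |α₀ + 1|) * Hnorm E α₀ u) ^ 2 := by
  have hβ' : α₀ < β := by linarith
  set w := β • G β u - u with hw
  have hwH : w ∈ H := H.sub_mem (H.smul_mem _ (hG.1 β hβ' u)) hu
  have hsq := hnorm_w_sq hcf G hG hβ' hu
  have h2 : -E u w ≤ (K + |α₀ + 1|) * (Hnorm E α₀ u * Hnorm E α₀ w) :=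
    (neg_le_abs _).trans (abs_E_le hcf hu hwH)
  have h3 := hnorm_w_le hcf G hG hβ hu
  have ha : 0 ≤ (K + |α₀ + 1|) * Hnorm E α₀ u := by
    have := hcf.one_le_K
    have := abs_nonneg (α₀ + 1)
    have := hnorm_nonneg (E := E) (α₀ := α₀) u
    positivity
  have h4 : ((K + |α₀ + 1|) * Hnorm E α₀ u) * Hnorm E α₀ w
      ≤ ((K + |α₀ + 1|) * Hnorm E α₀ u) * ((K + |α₀ + 1|) * Hnorm E α₀ u) :=
    mul_le_mul_of_nonneg_left h3 ha
  have h5 : 0 ≤ Hnorm E α₀ w ^ 2 := sq_nonneg _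
  nlinarith

lemma tendsto_norm_w (hcf : IsClosedForm E H α₀ K) (G : ℝ → L →ₗ[ℝ] L)
    (hG : IsResolventOf E H α₀ G) {u : L} (hu : u ∈ H) :
    Tendsto (fun β : ℝ => ‖β • G β u - u‖) atTop (𝓝 0) := by
  set C := (K + |α₀ + 1|) * Hnorm E α₀ u with hC
  have key : ∀ᶠ β : ℝ in atTop, ⟪β • G β u - u, β • G β u - u⟫ ≤ C ^ 2 / (β - (α₀ + 1)) := by
    filter_upwards [eventually_gt_atTop (α₀ + 1)] with β hβ
    have hpos : 0 < β - (α₀ + 1) := by linarith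
    rw [le_div_iff₀ hpos, hC]
    have := inner_w_le hcf G hG (le_of_lt hβ) hu
    linarith [mul_comm (β - (α₀ + 1)) (⟪β • G β u - u, β • G β u - u⟫ : ℝ)]
  have hsub : Tendsto (fun β : ℝ => β - (α₀ + 1)) atTop atTop := by
    simpa [sub_eq_add_neg] using tendsto_atTop_add_const_right atTop (-(α₀ + 1)) tendsto_id
  have hdiv : Tendsto (fun β : ℝ => C ^ 2 / (β - (α₀ + 1))) atTop (𝓝 0) :=
    Tendsto.div_atTop tendsto_const_nhds hsub
  have hI : Tendsto (fun β : ℝ => (⟪β • G β u - u, β • G β u - u⟫ : ℝ)) atTop (𝓝 0) :=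
    squeeze_zero' (Eventually.of_forall fun β => real_inner_self_nonneg) key hdiv
  have heq : (fun β : ℝ => ‖β • G β u - u‖)
      = fun β : ℝ => Real.sqrt ⟪β • G β u - u, β • G β u - u⟫ :=
    funext fun β => by
      rw [real_inner_self_eq_norm_mul_norm, Real.sqrt_mul_self (norm_nonneg _)]
  rw [heq]
  simpa using hI.sqrt

lemma tendsto_hnorm_w_res (hcf : IsClosedForm E H α₀ K) (G : ℝ → L →ₗ[ℝ] L)
    (hG : IsResolventOf E H α₀ G) (f : L) :
    Tendsto (fun β : ℝ => Hnorm E α₀ (β • G β (G (α₀ + 1) f) - G (α₀ + 1) f))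
      atTop (𝓝 0) := by
  have hα1 : α₀ < α₀ + 1 := lt_add_one α₀
  set u := G (α₀ + 1) f with hudef
  have hu : u ∈ H := hG.1 _ hα1 f
  set D := ‖f‖ + |α₀ + 1| * ‖u‖ with hD
  have key : ∀ᶠ β : ℝ in atTop,
      Hnorm E α₀ (β • G β u - u) ^ 2 ≤ D * ‖β • G β u - u‖ := by
    filter_upwards [eventually_ge_atTop (α₀ + 1)] with β hβ
    have hβ' : α₀ < β := by linarith
    set w := β • G β u - u with hw
    have hwH : w ∈ H := H.sub_mem (H.smul_mem _ (hG.1 β hβ' u)) hu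
    have hsq := hnorm_w_sq hcf G hG hβ' hu
    have hip : (0:ℝ) ≤ ⟪w, w⟫ := real_inner_self_nonneg
    have h1 : Hnorm E α₀ w ^ 2 ≤ -E u w := by nlinarith
    have hEuw : E u w = ⟪f, w⟫ - (α₀ + 1) * ⟪u, w⟫ := by
      have h := hG.2.1 (α₀ + 1) hα1 f w hwH
      rw [← hudef] at h
      linarith
    have h2 : -E u w ≤ D * ‖w‖ := by
      rw [hEuw, hD]
      have ha := abs_real_inner_le_norm f w
      have hb := abs_real_inner_le_norm u w
      have h3 : -(⟪f, w⟫ : ℝ) ≤ |(⟪f, w⟫ : ℝ)| := neg_le_abs _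
      have h4 : (α₀ + 1) * (⟪u, w⟫ : ℝ) ≤ |(α₀ + 1) * (⟪u, w⟫ : ℝ)| := le_abs_self _
      have h5 : |(α₀ + 1) * (⟪u, w⟫ : ℝ)| = |α₀ + 1| * |(⟪u, w⟫ : ℝ)| := abs_mul _ _
      have h6 : |α₀ + 1| * |(⟪u, w⟫ : ℝ)| ≤ |α₀ + 1| * (‖u‖ * ‖w‖) :=
        mul_le_mul_of_nonneg_left hb (abs_nonneg _)
      nlinarith
    linarith
  have hn0 := tendsto_norm_w hcf G hG hu
  have hDt : Tendsto (fun β : ℝ => D * ‖β • G β u - u‖) atTop (𝓝 0) := by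
    simpa using hn0.const_mul D
  have hsq0 : Tendsto (fun β : ℝ => Hnorm E α₀ (β • G β u - u) ^ 2) atTop (𝓝 0) :=
    squeeze_zero' (Eventually.of_forall fun β => sq_nonneg _) key hDt
  have heq : (fun β : ℝ => Hnorm E α₀ (β • G β u - u))
      = fun β : ℝ => Real.sqrt (Hnorm E α₀ (β • G β u - u) ^ 2) :=
    funext fun β => (Real.sqrt_sq (hnorm_nonneg _)).symm
  rw [heq]
  simpa using hsq0.sqrt

lemma tendsto_hnorm_w (hcf : IsClosedForm E H α₀ K) (G : ℝ → L →ₗ[ℝ] L)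
    (hG : IsResolventOf E H α₀ G) {u : L} (hu : u ∈ H) :
    Tendsto (fun β : ℝ => Hnorm E α₀ (β • G β u - u)) atTop (𝓝 0) := by
  rw [Metric.tendsto_atTop]
  intro ε hε
  set C := K + |α₀ + 1| with hCdef
  have hC : 1 ≤ C := le_add_of_le_of_nonneg hcf.one_le_K (abs_nonneg _)
  have hC0 : 0 < C := by linarith
  obtain ⟨f, hf⟩ := dense_range_aux hcf G hG u hu (ε / (2 * C)) (by positivity)
  have hα1 : α₀ < α₀ + 1 := lt_add_one α₀
  set v := G (α₀ + 1) f with hvdef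
  have hv : v ∈ H := hG.1 _ hα1 f
  have hres := tendsto_hnorm_w_res hcf G hG f
  rw [Metric.tendsto_atTop] at hres
  obtain ⟨N, hN⟩ := hres (ε / 2) (by positivity)
  refine ⟨max N (α₀ + 1), fun β hβ => ?_⟩
  have hβN : N ≤ β := le_trans (le_max_left _ _) hβ
  have hβ1 : α₀ + 1 ≤ β := le_trans (le_max_right _ _) hβ
  have hβ' : α₀ < β := by linarith
  have hsplit : β • G β u - u = (β • G β (u - v) - (u - v)) + (β • G β v - v) := by
    rw [map_sub, smul_sub]
    abel
  have hm1 : β • G β (u - v) - (u - v) ∈ H :=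
    H.sub_mem (H.smul_mem _ (hG.1 β hβ' _)) (H.sub_mem hu hv)
  have hm2 : β • G β v - v ∈ H := H.sub_mem (H.smul_mem _ (hG.1 β hβ' _)) hv
  have h1 : Hnorm E α₀ (β • G β u - u)
      ≤ Hnorm E α₀ (β • G β (u - v) - (u - v)) + Hnorm E α₀ (β • G β v - v) := by
    rw [hsplit]
    exact hnorm_triangle hcf hm1 hm2
  have h2 : Hnorm E α₀ (β • G β (u - v) - (u - v)) ≤ C * Hnorm E α₀ (u - v) :=
    hnorm_w_le hcf G hG hβ1 (H.sub_mem hu hv)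
  have h3 : Hnorm E α₀ (u - v) < ε / (2 * C) := by
    rw [hnorm_sub_symm hcf hu hv]
    exact hf
  have h4 := hN β hβN
  rw [Real.dist_eq, sub_zero, abs_of_nonneg (hnorm_nonneg _)] at h4
  rw [Real.dist_eq, sub_zero, abs_of_nonneg (hnorm_nonneg _)]
  have h5 : C * Hnorm E α₀ (u - v) < C * (ε / (2 * C)) := mul_lt_mul_of_pos_left h3 hC0
  have h6 : C * (ε / (2 * C)) = ε / 2 := by field_simp
  rw [← hvdef] at h4
  clear_value C v
  linarith

end ClosedFormAux

open ClosedFormAux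

/-- With `ℰ^{(β)}(u,v) := β ⟨u − β G_β u, v⟩_𝓛` for `β > α₀`:
(a) for every `α > α₀`, `G_α(𝓛)` is dense in the Hilbert space `(𝓗, ‖·‖_𝓗)`; and
(b) `lim_{β→∞} ℰ^{(β)}(u,v) = ℰ(u,v)` for all `u, v ∈ 𝓗`. -/
theorem range_dense_and_approx_form_tendsto
    {L : Type*} [NormedAddCommGroup L] [InnerProductSpace ℝ L] [CompleteSpace L]
    [TopologicalSpace.SeparableSpace L]
    (E : L → L → ℝ) (H : Submodule ℝ L) (α₀ K : ℝ)
    (hcf : IsClosedForm E H α₀ K)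
    (G : ℝ → L →ₗ[ℝ] L) (hG : IsResolventOf E H α₀ G) :
    -- (a) density of `G_α(𝓛)` in `(𝓗, ‖·‖_𝓗)`
    (∀ α > α₀, ∀ u ∈ H, ∀ ε > (0:ℝ), ∃ f : L, Hnorm E α₀ (G α f - u) < ε) ∧
    -- (b) convergence of the approximating forms
    (∀ u ∈ H, ∀ v ∈ H,
      Tendsto (fun β : ℝ => β * ⟪u - β • G β u, v⟫) atTop (𝓝 (E u v))) := by

  constructor
  · intro α hα u hu ε hε
    obtain ⟨f, hf⟩ := dense_range_aux hcf G hG u hu ε hε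
    refine ⟨f + (α - (α₀ + 1)) • G (α₀ + 1) f, ?_⟩
    have hres := hG.2.2.1 α (α₀ + 1) hα (lt_add_one α₀) f
    have heq : G α (f + (α - (α₀ + 1)) • G (α₀ + 1) f) = G (α₀ + 1) f := by
      rw [map_add, map_smul, ← sub_eq_zero, ← hres]
      abel
    rw [heq]
    exact hf
  · intro u hu v hv
    have key := tendsto_hnorm_w hcf G hG hu
    have hEv : Tendsto (fun β : ℝ => E (β • G β u - u) v) atTop (𝓝 0) := by
      have hb : ∀ᶠ β : ℝ in atTop, ‖E (β • G β u - u) v‖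
          ≤ ((K + |α₀ + 1|) * Hnorm E α₀ v) * Hnorm E α₀ (β • G β u - u) := by
        filter_upwards [eventually_gt_atTop α₀] with β hβ
        have hwH : β • G β u - u ∈ H := H.sub_mem (H.smul_mem _ (hG.1 β hβ u)) hu
        have h := abs_E_le hcf hwH hv
        rw [Real.norm_eq_abs]
        calc |E (β • G β u - u) v|
            ≤ (K + |α₀ + 1|) * (Hnorm E α₀ (β • G β u - u) * Hnorm E α₀ v) := h
          _ = ((K + |α₀ + 1|) * Hnorm E α₀ v) * Hnorm E α₀ (β • G β u - u) := by ring
      have ht : Tendsto (fun β : ℝ =>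
          ((K + |α₀ + 1|) * Hnorm E α₀ v) * Hnorm E α₀ (β • G β u - u)) atTop (𝓝 0) := by
        simpa using key.const_mul ((K + |α₀ + 1|) * Hnorm E α₀ v)
      exact squeeze_zero_norm' hb ht
    have hfinal : Tendsto (fun β : ℝ => E u v + E (β • G β u - u) v) atTop (𝓝 (E u v)) := by
      simpa using tendsto_const_nhds.add hEv
    have heqE : (fun β : ℝ => E u v + E (β • G β u - u) v)
        =ᶠ[atTop] fun β : ℝ => β * ⟪u - β • G β u, v⟫ := by
      filter_upwards [eventually_gt_atTop α₀] with β hβ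
      have h1 : E (β • G β u) v = β * ⟪u - β • G β u, v⟫ := E_ubeta hcf G hG hβ u hv
      have h2 : E (β • G β u - u) v = E (β • G β u) v - E u v :=
        E_sub_left hcf (H.smul_mem _ (hG.1 β hβ u)) hu hv
      rw [h2, h1]
      ring
    exact Tendsto.congr' heqE hfinal

end
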